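/- For every n ≥ 1, the discrete interval hypergraph H_n is (⌊log₂ n⌋ + 1)-conflict-free-choosable: for any assignment of lists L_i of positive integers with |L_i| ≥ ⌊log₂ n⌋ + 1 to each vertex i ∈ [n], there is a conflict-free coloring of H_n assigning each vertex a color from its own list. -/
import Mathlib

lemma cf_aux : ∀ (k a b : ℕ) (L : ℕ → Finset ℕ), 1 ≤ a →
    b + 1 - a ≤ 2 ^ (k + 1) - 1 →
    (∀ i ∈ Finset.Icc a b, k + 1 ≤ (L i).card) →
    ∃ C : ℕ → ℕ, (∀ i ∈ Finset.Icc a b, C i ∈ L i) ∧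
      ∀ s t : ℕ, a ≤ s → s ≤ t → t ≤ b →
        ∃ v ∈ Finset.Icc s t, ∀ u ∈ Finset.Icc s t, u ≠ v → C u ≠ C v := by
  intro k
  induction k with
  | zero =>
    intro a b L ha hlen hcard
    by_cases hab : a ≤ b
    · have hb : a = b := by simp at hlen; omega
      subst hb
      have hcpos : 0 < (L a).card := by have := hcard a (by simp); omega
      obtain ⟨c, hc⟩ := Finset.card_pos.mp hcpos
      refine ⟨fun _ => c, ?_, ?_⟩
      · intro i hi
        have : i = a := by simp at hi; omega
        simpa [this] using hc
      · intro s t hs hst ht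
        have hsa : s = a := by omega
        have hta : t = a := by omega
        refine ⟨a, by simp [hsa, hta], ?_⟩
        intro u hu hune
        simp [hsa, hta] at hu
        omega
    · refine ⟨fun _ => 0, ?_, ?_⟩
      · intro i hi; simp at hi; omega
      · intro s t hs hst ht; omega
  | succ k ih =>
    intro a b L ha hlen hcard
    by_cases hab : a ≤ b
    · set m := (a + b) / 2 with hm
      have ham : a ≤ m := by omega
      have hmb : m ≤ b := by omega
      have hcpos : 0 < (L m).card := by
        have := hcard m (by simp [Finset.mem_Icc]; omega); omega
      obtain ⟨c, hc⟩ := Finset.card_pos.mp hcpos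
      set L' : ℕ → Finset ℕ := fun i => (L i).erase c with hL'
      have hcard' : ∀ i ∈ Finset.Icc a b, k + 1 ≤ (L' i).card := by
        intro i hi
        have h1 := hcard i hi
        have h2 : (L i).card - 1 ≤ (L' i).card := Finset.pred_card_le_card_erase
        omega
      have hpow : 1 ≤ 2 ^ (k + 1) := Nat.one_le_two_pow
      have hp2 : (2:ℕ) ^ (k + 1 + 1) = 2 * 2 ^ (k + 1) := by
        rw [pow_succ]; ring
      obtain ⟨C₁, hC₁mem, hC₁cf⟩ := ih a (m - 1) L' ha (by omega)
        (fun i hi => hcard' i (by simp [Finset.mem_Icc] at hi ⊢; omega))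
      obtain ⟨C₂, hC₂mem, hC₂cf⟩ := ih (m + 1) b L' (by omega) (by omega)
        (fun i hi => hcard' i (by simp [Finset.mem_Icc] at hi ⊢; omega))
      refine ⟨fun i => if i < m then C₁ i else if i = m then c else C₂ i, ?_, ?_⟩
      · intro i hi
        simp only [Finset.mem_Icc] at hi
        by_cases h1 : i < m
        · have := hC₁mem i (by simp [Finset.mem_Icc]; omega)
          simp only [h1, if_pos]
          exact Finset.mem_of_mem_erase this
        · by_cases h2 : i = m
          · simpa [h2] using hc
          · have := hC₂mem i (by simp [Finset.mem_Icc]; omega)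
            simp only [h1, h2, if_neg, if_false]
            exact Finset.mem_of_mem_erase this
      · intro s t hs hst ht
        by_cases h1 : t < m
        · obtain ⟨v, hv, hvuniq⟩ := hC₁cf s t hs hst (by omega)
          simp only [Finset.mem_Icc] at hv
          refine ⟨v, by simp [Finset.mem_Icc]; omega, ?_⟩
          intro u hu hune
          simp only [Finset.mem_Icc] at hu
          have hum : u < m := by omega
          have hvm : v < m := by omega
          simpa [hum, hvm] using hvuniq u (by simp [Finset.mem_Icc]; omega) hune
        · by_cases h2 : m < s
          · obtain ⟨v, hv, hvuniq⟩ := hC₂cf s t (by omega) hst ht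
            simp only [Finset.mem_Icc] at hv
            refine ⟨v, by simp [Finset.mem_Icc]; omega, ?_⟩
            intro u hu hune
            simp only [Finset.mem_Icc] at hu
            have hum : ¬ u < m := by omega
            have hum' : u ≠ m := by omega
            have hvm : ¬ v < m := by omega
            have hvm' : v ≠ m := by omega
            simpa [hum, hum', hvm, hvm'] using
              hvuniq u (by simp [Finset.mem_Icc]; omega) hune
          · -- s ≤ m ≤ t, witness m
            refine ⟨m, by simp [Finset.mem_Icc]; omega, ?_⟩
            intro u hu hune
            simp only [Finset.mem_Icc] at hu
            by_cases hum : u < m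
            · have := hC₁mem u (by simp [Finset.mem_Icc]; omega)
              have hne : C₁ u ≠ c := Finset.ne_of_mem_erase this
              simpa [hum] using hne
            · have hum' : m < u := by omega
              have := hC₂mem u (by simp [Finset.mem_Icc]; omega)
              have hne : C₂ u ≠ c := Finset.ne_of_mem_erase this
              have h3 : ¬ u < m := by omega
              simpa [h3, hune] using hne
    · refine ⟨fun _ => 0, ?_, ?_⟩
      · intro i hi; simp at hi; omega
      · intro s t hs hst ht; omega

/-- The discrete interval hypergraph `H_n` is `(⌊log₂ n⌋ + 1)`-conflict-free-choosable:
for any lists `L i` of positive integers of size at least `⌊log₂ n⌋ + 1`, there is a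
conflict-free coloring of `H_n` choosing each vertex's color from its own list. -/
theorem cf_choosable_discrete_interval (n : ℕ) (hn : 1 ≤ n) (L : ℕ → Finset ℕ)
    (hpos : ∀ i ∈ Finset.Icc 1 n, ∀ c ∈ L i, 0 < c)
    (hsize : ∀ i ∈ Finset.Icc 1 n, Nat.log 2 n + 1 ≤ (L i).card) :
    ∃ C : ℕ → ℕ, (∀ i ∈ Finset.Icc 1 n, C i ∈ L i) ∧
      ∀ s t : ℕ, 1 ≤ s → s ≤ t → t ≤ n →
        ∃ v ∈ Finset.Icc s t, ∀ u ∈ Finset.Icc s t, u ≠ v → C u ≠ C v := by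
  have hlt : n < 2 ^ (Nat.log 2 n + 1) := Nat.lt_pow_succ_log_self (by norm_num) n
  exact cf_aux (Nat.log 2 n) 1 n L le_rfl (by omega) hsize
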